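/- Fix a real number b and an integer n ≥ 2. Define f(r) = (r(1 + b rⁿ))² for r > 0, and define K(r) = f(r)^{-1} ( −(1/2) f''(r) + (1/4) f'(r)² f(r)^{-1} ). Then K(r) + n(n+1) b r^{n−2} = O(r^{n−1}) as r → 0⁺; equivalently, K(r) = −n(n+1) b r^{n−2} + O(r^{n−1}). -/

import Mathlib

open Filter Asymptotics
open scoped Topology

/-- Leading term analysis: for `f(r) = (r(1 + b rⁿ))²` and
`K(r) = f(r)⁻¹(−½ f''(r) + ¼ f'(r)² f(r)⁻¹)` one has
`K(r) = −n(n+1) b r^{n−2} + O(r^{n−1})` as `r → 0⁺`. -/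
theorem stmt7 (b : ℝ) (n : ℕ) (hn : 2 ≤ n)
    (f K : ℝ → ℝ)
    (hf : ∀ r, f r = (r * (1 + b * r ^ n)) ^ 2)
    (hK : ∀ r, K r = (f r)⁻¹ *
        (-(1 / 2) * deriv (deriv f) r + (1 / 4) * (deriv f r) ^ 2 * (f r)⁻¹)) :
    (fun r => K r + (n * (n + 1) : ℝ) * b * r ^ (n - 2)) =O[𝓝[>] (0 : ℝ)]
      fun r => r ^ (n - 1) := by
  obtain ⟨m, rfl⟩ : ∃ m, n = m + 2 := ⟨n - 2, by omega⟩
  have hf' : f = fun r => r ^ 2 + (2*b) * r ^ (m+4) + b^2 * r ^ (2*m+6) := by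
    funext r; rw [hf]; ring
  have hd1 : ∀ r : ℝ, HasDerivAt f
      (2*r + (2*b*(m+4)) * r^(m+3) + (b^2*(2*m+6)) * r^(2*m+5)) r := by
    intro r
    rw [hf']
    have h := ((hasDerivAt_pow 2 r).add ((hasDerivAt_pow (m+4) r).const_mul (2*b))).add
      ((hasDerivAt_pow (2*m+6) r).const_mul (b^2))
    refine h.congr_deriv ?_
    rw [show m + 4 - 1 = m + 3 by omega, show 2 * m + 6 - 1 = 2 * m + 5 by omega]
    push_cast; ring
  have hdf : deriv f = fun r => 2*r + (2*b*(m+4)) * r^(m+3) + (b^2*(2*m+6)) * r^(2*m+5) :=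
    funext fun r => (hd1 r).deriv
  have hd2 : ∀ r : ℝ, HasDerivAt (deriv f)
      (2 + (2*b*(m+4)*(m+3)) * r^(m+2) + (b^2*(2*m+6)*(2*m+5)) * r^(2*m+4)) r := by
    intro r
    rw [hdf]
    have h := (((hasDerivAt_id r).const_mul 2).add
        ((hasDerivAt_pow (m+3) r).const_mul (2*b*(m+4)))).add
      ((hasDerivAt_pow (2*m+5) r).const_mul (b^2*(2*m+6)))
    refine h.congr_deriv ?_
    rw [show m + 3 - 1 = m + 2 by omega, show 2 * m + 5 - 1 = 2 * m + 4 by omega]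
    push_cast; ring
  have hddf : ∀ r : ℝ, deriv (deriv f) r
      = 2 + (2*b*(m+4)*(m+3)) * r^(m+2) + (b^2*(2*m+6)*(2*m+5)) * r^(2*m+4) :=
    fun r => (hd2 r).deriv
  have key : ∀ r : ℝ, r ≠ 0 → (1 + b*r^(m+2)) ≠ 0 →
      K r + ((m+2 : ℕ) * ((m+2 : ℕ) + 1) : ℝ) * b * r ^ m
        = (((m:ℝ)+2) * ((m:ℝ)+3)) * b^2 * r^(2*m+2) / (1 + b*r^(m+2)) := by
    intro r hr hu
    have hfr : f r = (r * (1 + b*r^(m+2)))^2 := hf r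
    have hfrne : f r ≠ 0 := by
      rw [hfr]; exact pow_ne_zero _ (mul_ne_zero hr hu)
    rw [hK, hddf, hdf, hfr]
    push_cast
    field_simp
    ring
  rw [isBigO_iff]
  refine ⟨2 * (((m:ℝ)+2) * ((m:ℝ)+3)) * b^2, ?_⟩
  have t : Filter.Tendsto (fun r : ℝ => b * r^(m+2)) (𝓝 0) (𝓝 0) := by
    exact (continuous_const.mul (continuous_pow (m+2))).tendsto' 0 0 (by simp)
  have habs : ∀ᶠ x in 𝓝 (0:ℝ), |x| ≤ 1/2 := by
    filter_upwards [Metric.ball_mem_nhds (0:ℝ) (by norm_num : (0:ℝ) < 1/2)] with x hx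
    rw [Metric.mem_ball, Real.dist_eq, sub_zero] at hx
    exact hx.le
  have e1 := t.eventually habs
  have e2 : ∀ᶠ r in 𝓝 (0:ℝ), r ≤ 1 := by
    filter_upwards [Metric.ball_mem_nhds (0:ℝ) one_pos] with x hx
    rw [Metric.mem_ball, Real.dist_eq, sub_zero] at hx
    linarith [(abs_lt.mp hx).2]
  filter_upwards [e1.filter_mono nhdsWithin_le_nhds, e2.filter_mono nhdsWithin_le_nhds,
    self_mem_nhdsWithin] with r h1 h2 h3
  have hrp : (0:ℝ) < r := h3
  have hu : (1:ℝ)/2 ≤ 1 + b * r^(m+2) := by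
    have := (abs_le.mp h1).1; linarith
  have hu0 : (1 + b * r^(m+2)) ≠ 0 := by positivity
  rw [show m + 2 - 2 = m from by omega, show m + 2 - 1 = m + 1 from by omega,
    key r (ne_of_gt hrp) hu0]
  have hupos : (0:ℝ) < 1 + b * r^(m+2) := by linarith
  rw [Real.norm_eq_abs, Real.norm_eq_abs, abs_div, abs_of_pos hupos,
    abs_of_nonneg (by positivity : (0:ℝ) ≤ (((m:ℝ)+2) * ((m:ℝ)+3)) * b^2 * r^(2*m+2)),
    abs_of_nonneg (by positivity : (0:ℝ) ≤ r^(m+1))]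
  have hpow : r^(2*m+2) ≤ r^(m+1) := by
    have h1' : r^(2*m+2) = r^(m+1) * r^(m+1) := by ring
    have h2' : r^(m+1) ≤ 1 := pow_le_one₀ hrp.le h2
    nlinarith [pow_pos hrp (m+1)]
  rw [div_le_iff₀ hupos]
  have hA : (0:ℝ) ≤ ((m:ℝ)+2) * ((m:ℝ)+3) * b^2 := by positivity
  have hx1 : ((m:ℝ)+2) * ((m:ℝ)+3) * b^2 * r^(2*m+2)
      ≤ ((m:ℝ)+2) * ((m:ℝ)+3) * b^2 * r^(m+1) := mul_le_mul_of_nonneg_left hpow hA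
  have hx2 := mul_le_mul_of_nonneg_left hu
    (by positivity : (0:ℝ) ≤ 2*(((m:ℝ)+2)*((m:ℝ)+3))*b^2*r^(m+1))
  nlinarith [hx1, hx2]
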